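/- For all t > 0, integer n ≥ 3, and x ∈ [0,1], Σ_{j=0}^{n-1} e^{2λⱼⁿ t} ≥ (1 - e^{-2n²π²t})/√(32πt), where λⱼⁿ = -4n² sin²(jπ/n). Consequently ∫₀¹ (Gⁿ(t,κₙ(x),y))² dy ≥ (1 - e^{-2n²π²t})/√(32πt). -/

import Mathlib

open Real MeasureTheory

/-- Left grid point `⌊ny⌋/n`. -/
noncomputable def kappa (n : ℕ) (y : ℝ) : ℝ := (⌊(n : ℝ) * y⌋ : ℝ) / n

/-- `e_j(x) = e^{2πi j x}`. -/
noncomputable def efun (j : ℕ) (x : ℝ) : ℂ :=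
  Complex.exp (2 * (π : ℂ) * Complex.I * (j : ℂ) * (x : ℂ))

/-- Piecewise-linear interpolation of `e_j` on the grid `{k/n}`. -/
noncomputable def efunInterp (n j : ℕ) (x : ℝ) : ℂ :=
  efun j (kappa n x) +
    (((n : ℝ) * x - (n : ℝ) * kappa n x : ℝ) : ℂ) *
      (efun j (kappa n x + 1 / n) - efun j (kappa n x))

/-- Eigenvalues `λⱼⁿ = -4n² sin²(jπ/n)`. -/
noncomputable def lamn (n j : ℕ) : ℝ := -4 * (n : ℝ) ^ 2 * Real.sin ((j : ℝ) * π / n) ^ 2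

/-- The semi-discrete Green function
`Gⁿ(t,x,y) = ∑_{j=0}^{n-1} e^{λⱼⁿ t} eⱼⁿ(x) ēⱼ(κₙ(y))`. -/
noncomputable def Gsemi (n : ℕ) (t x y : ℝ) : ℂ :=
  ∑ j ∈ Finset.range n,
    (Real.exp (lamn n j * t) : ℂ) * efunInterp n j x * (starRingEnd ℂ) (efun j (kappa n y))


lemma gauss_tail (a M : ℝ) (ha : 0 < a) (hM : 0 ≤ M) :
    ∫ x in Set.Ioi M, Real.exp (-a * x^2) ≤ Real.exp (-a*M^2) * (Real.sqrt (π/a)/2) := by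
  have hint : Integrable (fun x : ℝ => Real.exp (-a * x^2)) := integrable_exp_neg_mul_sq ha
  have h1 : ∫ x in Set.Ioi M, Real.exp (-a * x^2)
      = ∫ x in Set.Ioi (0:ℝ), Real.exp (-a * (x + M)^2) := by
    rw [← (measurePreserving_add_right volume M).setIntegral_preimage_emb
      (measurableEmbedding_addRight M) (fun x => Real.exp (-a * x^2)) (Set.Ioi M)]
    congr 1
    ext x
    simp
  rw [h1]
  have h2 : ∫ x in Set.Ioi (0:ℝ), Real.exp (-a*M^2) * Real.exp (-a * x^2)
      = Real.exp (-a*M^2) * (Real.sqrt (π/a)/2) := by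
    rw [integral_const_mul, integral_gaussian_Ioi]
  rw [← h2]
  apply setIntegral_mono_on
  · apply Integrable.integrableOn
    have : Integrable (fun x : ℝ => Real.exp (-a * x^2)) := hint
    exact (this.comp_add_right M)
  · exact (hint.const_mul _).integrableOn
  · exact measurableSet_Ioi
  · intro x hx
    rw [← Real.exp_add]
    apply Real.exp_le_exp.2
    have hx0 : (0:ℝ) < x := Set.mem_Ioi.1 hx
    nlinarith [mul_nonneg hx0.le hM, ha.le]

lemma gauss_lb (a M : ℝ) (ha : 0 < a) (hM : 0 ≤ M) :
    (1 - Real.exp (-a*M^2)) * (Real.sqrt (π/a)/2) ≤ ∫ x in (0:ℝ)..M, Real.exp (-a*x^2) := by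
  have hint : Integrable (fun x : ℝ => Real.exp (-a * x^2)) := integrable_exp_neg_mul_sq ha
  have hsplit : (∫ x in Set.Ioc (0:ℝ) M, Real.exp (-a*x^2))
      + ∫ x in Set.Ioi M, Real.exp (-a*x^2) = Real.sqrt (π/a)/2 := by
    rw [← integral_gaussian_Ioi a, ← MeasureTheory.setIntegral_union]
    · rw [Set.Ioc_union_Ioi_eq_Ioi hM]
    · exact Set.Ioc_disjoint_Ioi le_rfl
    · exact measurableSet_Ioi
    · exact hint.integrableOn
    · exact hint.integrableOn
  rw [intervalIntegral.integral_of_le hM]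
  have := gauss_tail a M ha hM
  nlinarith [Real.sqrt_nonneg (π/a)]

lemma sum_ge_integral (a : ℝ) (ha : 0 < a) (k : ℕ) :
    ∫ x in (0:ℝ)..(k:ℝ), Real.exp (-a*x^2) ≤ ∑ j ∈ Finset.range k, Real.exp (-a*(j:ℝ)^2) := by
  have h : AntitoneOn (fun x : ℝ => Real.exp (-a*x^2)) (Set.Icc 0 (0 + k)) := by
    intro u hu v hv huv
    apply Real.exp_le_exp.2
    nlinarith [hu.1, hv.1, mul_le_mul_of_nonneg_left (sq_le_sq' (by linarith [hu.1] : -v ≤ u) huv) ha.le]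
  have := h.integral_le_sum
  simpa using this

lemma part1 (n : ℕ) (hn : 3 ≤ n) (t : ℝ) (ht : 0 < t) :
    (1 - Real.exp (-2 * (n : ℝ) ^ 2 * π ^ 2 * t)) / Real.sqrt (32 * π * t) ≤
      ∑ j ∈ Finset.range n, Real.exp (2 * lamn n j * t) := by
  set a : ℝ := 8 * π ^ 2 * t with ha_def
  have hπ := Real.pi_pos
  have ha : 0 < a := by positivity
  have hn0 : (0:ℝ) < n := by positivity
  -- rewrite LHS
  have h8 : (0:ℝ) < 8 * π * t := by positivity
  have hs32 : Real.sqrt (32 * π * t) = 2 * Real.sqrt (8 * π * t) := by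
    rw [show (32:ℝ) * π * t = 4 * (8 * π * t) by ring, Real.sqrt_mul (by norm_num),
      show (4:ℝ) = 2 ^ 2 by norm_num, Real.sqrt_sq (by norm_num)]
  have hsa : Real.sqrt (π / a) = (Real.sqrt (8 * π * t))⁻¹ := by
    rw [show π / a = (8 * π * t)⁻¹ by rw [ha_def]; field_simp, Real.sqrt_inv]
  have hLHS : (1 - Real.exp (-2 * (n : ℝ) ^ 2 * π ^ 2 * t)) / Real.sqrt (32 * π * t)
      = (1 - Real.exp (-a * ((n:ℝ)/2) ^ 2)) * (Real.sqrt (π / a) / 2) := by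
    rw [hs32, hsa, show -a * ((n:ℝ)/2) ^ 2 = -2 * (n : ℝ) ^ 2 * π ^ 2 * t by rw [ha_def]; ring]
    rw [div_eq_mul_inv, mul_inv]
    ring
  rw [hLHS]
  set m : ℕ := n / 2 + 1 with hm_def
  have hMm : ((n:ℝ)/2) ≤ (m:ℝ) := by
    have h2 : n ≤ 2 * (n / 2) + 2 := by omega
    have : (n:ℝ) ≤ 2 * ((n/2 : ℕ):ℝ) + 2 := by exact_mod_cast h2
    simp only [hm_def]
    push_cast
    linarith
  calc (1 - Real.exp (-a * ((n:ℝ)/2) ^ 2)) * (Real.sqrt (π / a) / 2)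
      ≤ ∫ z in (0:ℝ)..((n:ℝ)/2), Real.exp (-a * z ^ 2) := gauss_lb a _ ha (by positivity)
    _ ≤ ∫ z in (0:ℝ)..(m:ℝ), Real.exp (-a * z ^ 2) := by
        have hi1 : IntervalIntegrable (fun z : ℝ => Real.exp (-a * z ^ 2)) volume 0 ((n:ℝ)/2) :=
          (integrable_exp_neg_mul_sq ha).intervalIntegrable
        have hi2 : IntervalIntegrable (fun z : ℝ => Real.exp (-a * z ^ 2)) volume ((n:ℝ)/2) (m:ℝ) :=
          (integrable_exp_neg_mul_sq ha).intervalIntegrable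
        rw [← intervalIntegral.integral_add_adjacent_intervals hi1 hi2]
        have : 0 ≤ ∫ z in ((n:ℝ)/2)..(m:ℝ), Real.exp (-a * z ^ 2) :=
          intervalIntegral.integral_nonneg hMm (fun u _ => (Real.exp_pos _).le)
        linarith
    _ ≤ ∑ j ∈ Finset.range m, Real.exp (-a * (j:ℝ) ^ 2) := sum_ge_integral a ha m
    _ ≤ ∑ j ∈ Finset.range m, Real.exp (2 * lamn n j * t) := by
        apply Finset.sum_le_sum
        intro j _
        apply Real.exp_le_exp.2
        have hsin : Real.sin ((j:ℝ) * π / n) ^ 2 ≤ ((j:ℝ) * π / n) ^ 2 := Real.sin_sq_le_sq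
        have : (n:ℝ)^2 * Real.sin ((j:ℝ) * π / n) ^ 2 ≤ (j:ℝ)^2 * π^2 := by
          have := mul_le_mul_of_nonneg_left hsin (by positivity : (0:ℝ) ≤ (n:ℝ)^2)
          calc (n:ℝ)^2 * Real.sin ((j:ℝ) * π / n) ^ 2 ≤ (n:ℝ)^2 * ((j:ℝ) * π / n) ^ 2 := this
            _ = (j:ℝ)^2 * π^2 := by field_simp
        rw [lamn, ha_def]
        nlinarith
    _ ≤ ∑ j ∈ Finset.range n, Real.exp (2 * lamn n j * t) := by
        apply Finset.sum_le_sum_of_subset_of_nonneg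
        · apply Finset.range_subset_range.2
          omega
        · intro j _ _
          exact (Real.exp_pos _).le


lemma conj_efun (j : ℕ) (x : ℝ) :
    (starRingEnd ℂ) (efun j x) = Complex.exp (-(2 * (π:ℂ) * Complex.I * j * x)) := by
  rw [efun, ← Complex.exp_conj]
  congr 1
  simp only [map_mul, Complex.conj_I, Complex.conj_ofReal, Complex.conj_natCast, map_ofNat]
  ring

lemma ortho (n : ℕ) (hn : 0 < n) (j k : ℕ) (hj : j < n) (hk : k < n) :
    ∑ m ∈ Finset.range n, (starRingEnd ℂ) (efun j ((m:ℝ)/n)) * efun k ((m:ℝ)/n)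
      = if j = k then (n : ℂ) else 0 := by
  have hn' : (n:ℂ) ≠ 0 := Nat.cast_ne_zero.2 hn.ne'
  have key : ∀ m : ℕ, (starRingEnd ℂ) (efun j ((m:ℝ)/n)) * efun k ((m:ℝ)/n)
      = (Complex.exp (2*(π:ℂ)*Complex.I*((k:ℂ)-(j:ℂ))/n)) ^ m := by
    intro m
    rw [conj_efun, efun, ← Complex.exp_nat_mul, ← Complex.exp_add]
    congr 1
    push_cast
    field_simp
    ring
  simp_rw [key]
  by_cases h : j = k
  · subst h
    simp
  · rw [if_neg h]
    set ω : ℂ := Complex.exp (2*(π:ℂ)*Complex.I*((k:ℂ)-(j:ℂ))/n) with hω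
    have hω1 : ω ≠ 1 := by
      rw [hω, Ne, Complex.exp_eq_one_iff]
      rintro ⟨z, hz⟩
      have h2 : ((k:ℂ) - (j:ℂ)) = z * n := by
        have hI : (2*(π:ℂ)*Complex.I) ≠ 0 := by
          simp [Complex.I_ne_zero, Complex.ofReal_ne_zero, Real.pi_ne_zero]
        field_simp at hz
        have := hz
        -- hz : 2*π*I*(k - j) = z*(2*π*I)*n  (roughly)
        apply mul_left_cancel₀ hI
        linear_combination (2*(π:ℂ)*Complex.I) * hz
      have h3 : (k:ℤ) - (j:ℤ) = z * n := by
        exact_mod_cast h2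
      have hjk : j ≠ k := h
      have hz1 : z * (n:ℤ) ≤ -(n:ℤ) ∨ z * (n:ℤ) = 0 ∨ (n:ℤ) ≤ z * n := by
        rcases lt_trichotomy z 0 with h0 | h0 | h0
        · left; nlinarith [hn]
        · right; left; simp [h0]
        · right; right; nlinarith [hn]
      omega
    have hωn : ω ^ n = 1 := by
      rw [hω, ← Complex.exp_nat_mul]
      have : (n:ℂ) * (2*(π:ℂ)*Complex.I*((k:ℂ)-(j:ℂ))/n) = ((k:ℤ) - (j:ℤ) : ℤ) * (2*(π:ℂ)*Complex.I) := by
        push_cast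
        field_simp
      rw [this, Complex.exp_int_mul_two_pi_mul_I]
    rw [geom_sum_eq hω1, hωn]
    simp

lemma kappa_idem (n : ℕ) (hn : 0 < n) (x : ℝ) : kappa n (kappa n x) = kappa n x := by
  have hn' : (n:ℝ) ≠ 0 := Nat.cast_ne_zero.2 hn.ne'
  unfold kappa
  rw [mul_div_cancel₀ _ hn', Int.floor_intCast]

lemma interp_at_grid (n : ℕ) (hn : 0 < n) (x : ℝ) (j : ℕ) :
    efunInterp n j (kappa n x) = efun j (kappa n x) := by
  unfold efunInterp
  rw [kappa_idem n hn]
  simp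

lemma kappa_on_Ioo (n : ℕ) (hn : 0 < n) (m : ℕ) (y : ℝ)
    (hy : y ∈ Set.Ioo ((m:ℝ)/n) (((m:ℝ)+1)/n)) : kappa n y = (m:ℝ)/n := by
  have hn' : (0:ℝ) < n := Nat.cast_pos.2 hn
  have h1 : (m:ℝ) ≤ (n:ℝ) * y := by
    have := hy.1
    rw [div_lt_iff₀ hn'] at this
    linarith
  have h2 : (n:ℝ) * y < (m:ℝ) + 1 := by
    have := hy.2
    rw [lt_div_iff₀ hn'] at this
    linarith
  have hfl : ⌊(n:ℝ) * y⌋ = (m:ℤ) := by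
    rw [Int.floor_eq_iff]
    constructor <;> push_cast <;> [linarith; linarith]
  unfold kappa
  rw [hfl]
  push_cast
  ring

lemma sum_reflect {M : Type*} [AddCommMonoid M] (n : ℕ) (hn : 1 ≤ n) (f g : ℕ → M)
    (h0 : f 0 = g 0) (h : ∀ j, 1 ≤ j → j ≤ n - 1 → f (n - j) = g j) :
    ∑ j ∈ Finset.range n, f j = ∑ j ∈ Finset.range n, g j := by
  obtain ⟨m, rfl⟩ : ∃ m, n = m + 1 := ⟨n - 1, by omega⟩
  rw [Finset.sum_range_succ' f, Finset.sum_range_succ' g, h0]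
  congr 1
  rw [← Finset.sum_range_reflect (fun i => f (i + 1)) m]
  apply Finset.sum_congr rfl
  intro i hi
  have hi' : i < m := Finset.mem_range.1 hi
  have : m - 1 - i + 1 = (m + 1) - (i + 1) := by omega
  rw [this, h (i + 1) (by omega) (by omega)]

lemma S_real (n : ℕ) (hn : 0 < n) (c : ℕ → ℝ)
    (hc : ∀ j, 1 ≤ j → j ≤ n - 1 → c (n - j) = c j) (d : ℤ) :
    (starRingEnd ℂ) (∑ j ∈ Finset.range n,
        (c j : ℂ) * Complex.exp (2*(π:ℂ)*Complex.I*(j:ℂ)*(d:ℂ)/(n:ℂ)))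
      = ∑ j ∈ Finset.range n, (c j : ℂ) * Complex.exp (2*(π:ℂ)*Complex.I*(j:ℂ)*(d:ℂ)/(n:ℂ)) := by
  have hn' : (n:ℂ) ≠ 0 := Nat.cast_ne_zero.2 hn.ne'
  rw [map_sum]
  have hconj : ∀ j : ℕ, (starRingEnd ℂ) ((c j : ℂ) * Complex.exp (2*(π:ℂ)*Complex.I*(j:ℂ)*(d:ℂ)/(n:ℂ)))
      = (c j : ℂ) * Complex.exp (-(2*(π:ℂ)*Complex.I*(j:ℂ)*(d:ℂ)/(n:ℂ))) := by
    intro j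
    rw [map_mul, ← Complex.exp_conj]
    congr 1
    · exact Complex.conj_ofReal _
    · congr 1
      simp only [map_div₀, map_mul, Complex.conj_I, Complex.conj_ofReal, Complex.conj_natCast,
        map_intCast (starRingEnd ℂ), map_ofNat]
      ring
  simp_rw [hconj]
  apply sum_reflect n hn
  · simp
  · intro j hj1 hjn
    have hjle : j ≤ n := by omega
    have hcast : ((n - j : ℕ) : ℂ) = (n : ℂ) - (j : ℂ) := by
      push_cast [Nat.cast_sub hjle]; ring
    rw [hc j hj1 hjn, hcast]
    congr 1
    have hsplit : -(2*(π:ℂ)*Complex.I*((n:ℂ) - (j:ℂ))*(d:ℂ)/(n:ℂ))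
        = (-d : ℤ) * (2*(π:ℂ)*Complex.I) + 2*(π:ℂ)*Complex.I*(j:ℂ)*(d:ℂ)/(n:ℂ) := by
      push_cast
      field_simp
      ring
    rw [hsplit, Complex.exp_add, Complex.exp_int_mul_two_pi_mul_I, one_mul]

lemma efun_mul_conj (j : ℕ) (x : ℝ) : efun j x * (starRingEnd ℂ) (efun j x) = 1 := by
  rw [conj_efun, efun, ← Complex.exp_add, add_neg_cancel, Complex.exp_zero]

lemma lamn_reflect (n j : ℕ) (hn : 0 < n) (h1 : 1 ≤ j) (h2 : j ≤ n - 1) :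
    lamn n (n - j) = lamn n j := by
  have hn' : (n:ℝ) ≠ 0 := Nat.cast_ne_zero.2 hn.ne'
  unfold lamn
  congr 2
  have hcast : ((n - j : ℕ) : ℝ) = (n:ℝ) - j := Nat.cast_sub (by omega)
  rw [hcast]
  have : ((n:ℝ) - j) * π / n = π - (j:ℝ) * π / n := by field_simp
  rw [this, Real.sin_pi_sub]

lemma efun_term (n j : ℕ) (hn : 0 < n) (pz m : ℤ) :
    efun j ((pz:ℝ)/n) * (starRingEnd ℂ) (efun j ((m:ℝ)/n))
      = Complex.exp (2*(π:ℂ)*Complex.I*(j:ℂ)*((pz - m : ℤ):ℂ)/(n:ℂ)) := by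
  have hn' : (n:ℂ) ≠ 0 := Nat.cast_ne_zero.2 hn.ne'
  rw [conj_efun, efun, ← Complex.exp_add]
  congr 1
  push_cast
  field_simp
  ring

lemma integral_eq (n : ℕ) (hn : 3 ≤ n) (t x : ℝ) :
    ∫ y in (0:ℝ)..1, ((Gsemi n t (kappa n x) y).re) ^ 2
      = ∑ j ∈ Finset.range n, Real.exp (2 * lamn n j * t) := by
  have hn0 : 0 < n := by omega
  have hnR : (0:ℝ) < n := Nat.cast_pos.2 hn0
  have hnR' : (n:ℝ) ≠ 0 := hnR.ne'
  set c : ℕ → ℝ := fun j => Real.exp (lamn n j * t) with hc_def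
  set p : ℤ := ⌊(n:ℝ) * x⌋ with hp_def
  have hkx : kappa n x = (p:ℝ)/n := rfl
  set S : ℕ → ℂ := fun m => ∑ j ∈ Finset.range n,
      (c j : ℂ) * efun j (kappa n x) * (starRingEnd ℂ) (efun j ((m:ℝ)/n)) with hS_def
  set f : ℝ → ℝ := fun y => ((Gsemi n t (kappa n x) y).re) ^ 2 with hf_def
  -- canonical form of S
  have hScanon : ∀ m : ℕ, S m = ∑ j ∈ Finset.range n,
      (c j : ℂ) * Complex.exp (2*(π:ℂ)*Complex.I*(j:ℂ)*((p - (m:ℤ) : ℤ):ℂ)/(n:ℂ)) := by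
    intro m
    rw [hS_def]
    apply Finset.sum_congr rfl
    intro j _
    rw [mul_assoc, hkx, show ((m:ℕ):ℝ) = (((m:ℤ):ℤ):ℝ) by push_cast; ring,
      efun_term n j hn0 p (m:ℤ)]
  -- reality
  have hconjS : ∀ m : ℕ, (starRingEnd ℂ) (S m) = S m := by
    intro m
    rw [hScanon m]
    exact S_real n hn0 c (fun j h1 h2 => by
      simp only [hc_def]; rw [lamn_reflect n j hn0 h1 h2]) _
  have himS : ∀ m : ℕ, (S m).im = 0 := fun m => Complex.conj_eq_iff_im.1 (hconjS m)
  -- value of G on subintervals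
  have hGval : ∀ (m : ℕ) (y : ℝ), kappa n y = (m:ℝ)/n → Gsemi n t (kappa n x) y = S m := by
    intro m y hy
    rw [Gsemi, hS_def]
    apply Finset.sum_congr rfl
    intro j _
    rw [interp_at_grid n hn0 x j, hy]
  -- orthogonality computation
  have hkey : ∑ m ∈ Finset.range n, (S m * (starRingEnd ℂ) (S m))
      = (n:ℂ) * ∑ j ∈ Finset.range n, ((c j : ℂ))^2 := by
    have expand : ∀ m : ℕ, S m * (starRingEnd ℂ) (S m)
        = ∑ j ∈ Finset.range n, ∑ k ∈ Finset.range n,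
            ((c j : ℂ) * (c k : ℂ) * (efun j (kappa n x) * (starRingEnd ℂ) (efun k (kappa n x))))
              * ((starRingEnd ℂ) (efun j ((m:ℝ)/n)) * efun k ((m:ℝ)/n)) := by
      intro m
      rw [hS_def, map_sum, Finset.sum_mul_sum]
      apply Finset.sum_congr rfl
      intro j _
      apply Finset.sum_congr rfl
      intro k _
      simp only [map_mul, Complex.conj_conj, Complex.conj_ofReal]
      ring
    simp_rw [expand]
    rw [Finset.sum_comm]
    have inner : ∀ j ∈ Finset.range n,
        (∑ m ∈ Finset.range n, ∑ k ∈ Finset.range n,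
          ((c j : ℂ) * (c k : ℂ) * (efun j (kappa n x) * (starRingEnd ℂ) (efun k (kappa n x))))
            * ((starRingEnd ℂ) (efun j ((m:ℝ)/n)) * efun k ((m:ℝ)/n)))
        = (n:ℂ) * ((c j : ℂ))^2 := by
      intro j hj
      rw [Finset.sum_comm]
      have hcol : ∀ k ∈ Finset.range n,
          (∑ m ∈ Finset.range n,
            ((c j : ℂ) * (c k : ℂ) * (efun j (kappa n x) * (starRingEnd ℂ) (efun k (kappa n x))))
              * ((starRingEnd ℂ) (efun j ((m:ℝ)/n)) * efun k ((m:ℝ)/n)))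
          = ((c j : ℂ) * (c k : ℂ) * (efun j (kappa n x) * (starRingEnd ℂ) (efun k (kappa n x))))
              * (if j = k then (n:ℂ) else 0) := by
        intro k hk
        rw [← Finset.mul_sum, ortho n hn0 j k (Finset.mem_range.1 hj) (Finset.mem_range.1 hk)]
      rw [Finset.sum_congr rfl hcol]
      simp only [mul_ite, mul_zero]
      rw [Finset.sum_ite_eq (Finset.range n) j
        (fun k => (c j : ℂ) * (c k : ℂ) * (efun j (kappa n x) * (starRingEnd ℂ) (efun k (kappa n x))) * (n:ℂ))]
      rw [if_pos hj, efun_mul_conj]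
      ring
    rw [Finset.sum_congr rfl inner, ← Finset.mul_sum]
  -- real version
  have hsum_re : ∑ m ∈ Finset.range n, ((S m).re) ^ 2
      = (n:ℝ) * ∑ j ∈ Finset.range n, (c j)^2 := by
    have h1 : ∀ m : ℕ, ((S m).re) ^ 2 = (S m * (starRingEnd ℂ) (S m)).re := by
      intro m
      rw [Complex.mul_re, Complex.conj_re, Complex.conj_im, himS m]
      ring
    simp_rw [h1]
    rw [← Complex.re_sum, hkey]
    have : (n:ℂ) * ∑ j ∈ Finset.range n, ((c j : ℂ))^2
        = (((n:ℝ) * ∑ j ∈ Finset.range n, (c j)^2 : ℝ) : ℂ) := by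
      push_cast
      ring
    rw [this, Complex.ofReal_re]
  -- piecewise evaluation of the integral
  set a : ℕ → ℝ := fun k => (k:ℝ)/n with ha_def
  have hle : ∀ m : ℕ, a m ≤ a (m + 1) := by
    intro m
    simp only [ha_def]
    gcongr
    omega
  have hEqOn : ∀ m : ℕ, Set.EqOn f (fun _ => ((S m).re) ^ 2) (Set.Ioo (a m) (a (m + 1))) := by
    intro m y hy
    have hy' : y ∈ Set.Ioo ((m:ℝ)/n) (((m:ℝ)+1)/n) := by
      simpa [ha_def, Nat.cast_add, Nat.cast_one] using hy
    have hk := kappa_on_Ioo n hn0 m y hy'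
    simp only [hf_def]
    rw [hGval m y hk]
  have hII : ∀ m : ℕ, IntervalIntegrable f volume (a m) (a (m + 1)) := by
    intro m
    rw [intervalIntegrable_iff_integrableOn_Ioo_of_le (hle m)]
    exact (integrableOn_const measure_Ioo_lt_top.ne).congr_fun
      (fun y hy => (hEqOn m hy).symm) measurableSet_Ioo
  have hval : ∀ m : ℕ, ∫ y in (a m)..(a (m+1)), f y = (1/(n:ℝ)) * ((S m).re) ^ 2 := by
    intro m
    rw [intervalIntegral.integral_of_le (hle m), MeasureTheory.integral_Ioc_eq_integral_Ioo,
      setIntegral_congr_fun measurableSet_Ioo (hEqOn m), setIntegral_const,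
      Real.volume_real_Ioo_of_le (hle m)]
    have : a (m+1) - a m = 1/(n:ℝ) := by
      simp only [ha_def]
      push_cast
      field_simp
      ring
    rw [this, smul_eq_mul]
  have hsplit := intervalIntegral.sum_integral_adjacent_intervals
    (a := a) (μ := volume) (f := f) (n := n) (fun k _ => hII k)
  have ha0 : a 0 = 0 := by simp [ha_def]
  have han : a n = 1 := by simp [ha_def, hnR']
  rw [ha0, han] at hsplit
  calc ∫ y in (0:ℝ)..1, f y = ∑ m ∈ Finset.range n, ∫ y in (a m)..(a (m+1)), f y := hsplit.symm
    _ = ∑ m ∈ Finset.range n, (1/(n:ℝ)) * ((S m).re) ^ 2 := Finset.sum_congr rfl (fun m _ => hval m)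
    _ = (1/(n:ℝ)) * ∑ m ∈ Finset.range n, ((S m).re) ^ 2 := by rw [Finset.mul_sum]
    _ = (1/(n:ℝ)) * ((n:ℝ) * ∑ j ∈ Finset.range n, (c j)^2) := by rw [hsum_re]
    _ = ∑ j ∈ Finset.range n, (c j)^2 := by field_simp
    _ = ∑ j ∈ Finset.range n, Real.exp (2 * lamn n j * t) := by
        apply Finset.sum_congr rfl
        intro j _
        rw [hc_def]
        rw [← Real.exp_nat_mul]
        congr 1
        ring

theorem stmt10 (n : ℕ) (hn : 3 ≤ n) (t x : ℝ) (ht : 0 < t) (hx : x ∈ Set.Icc (0 : ℝ) 1) :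
    ((1 - Real.exp (-2 * (n : ℝ) ^ 2 * π ^ 2 * t)) / Real.sqrt (32 * π * t) ≤
      ∑ j ∈ Finset.range n, Real.exp (2 * lamn n j * t)) ∧
    (1 - Real.exp (-2 * (n : ℝ) ^ 2 * π ^ 2 * t)) / Real.sqrt (32 * π * t) ≤
      ∫ y in (0 : ℝ)..1, ((Gsemi n t (kappa n x) y).re) ^ 2 := by
  refine ⟨part1 n hn t ht, ?_⟩
  rw [integral_eq n hn t x]
  exact part1 n hn t ht
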